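/- Under the standard linear model y = Xβ* + w, for λ > 0 and ε ∈ [0,1), if λ ≥ ‖Xᵀw‖_∞/(1−ε) and β̃ ∈ ℝ^d satisfies (1/2)‖y − Xβ̃‖₂² + λ‖β̃‖₁ ≤ min_β[(1/2)‖y − Xβ‖₂² + λ‖β‖₁] + λε‖β̃‖₁, then ‖X(β* − β̃)‖₂² ≤ 2(2−ε)λ‖β*‖₁. -/

import Mathlib

open Matrix

/-- The Lasso cost function `β ↦ (1/2)‖y − Xβ‖₂² + λ‖β‖₁`. -/
noncomputable def lassoCost {n d : ℕ} (X : Matrix (Fin n) (Fin d) ℝ) (y : Fin n → ℝ)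
    (lam : ℝ) (β : Fin d → ℝ) : ℝ :=
  (1 / 2) * ∑ i, (y i - X.mulVec β i) ^ 2 + lam * ∑ j, |β j|

/-- Slow-rate bound: under the linear model `y = Xβ* + w`, if `λ ≥ ‖Xᵀw‖_∞ / (1 − ε)`
and `β̃` is an approximate Lasso solution with error `λ ε ‖β̃‖₁`, then
`‖X(β* − β̃)‖₂² ≤ 2(2 − ε)λ‖β*‖₁`. -/
theorem lasso_slow_rate {n d : ℕ} (X : Matrix (Fin n) (Fin d) ℝ)
    (βs : Fin d → ℝ) (w : Fin n → ℝ) (y : Fin n → ℝ) (hy : y = fun i => X.mulVec βs i + w i)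
    (lam ε : ℝ) (hlam : 0 < lam) (hε₀ : 0 ≤ ε) (hε₁ : ε < 1)
    (hlamw : ∀ j, |∑ i, X i j * w i| ≤ (1 - ε) * lam)
    (βt : Fin d → ℝ)
    (happrox : lassoCost X y lam βt ≤
      (⨅ β : Fin d → ℝ, lassoCost X y lam β) + lam * ε * ∑ j, |βt j|) :
    ∑ i, (X.mulVec (fun j => βs j - βt j) i) ^ 2 ≤
      2 * (2 - ε) * lam * ∑ j, |βs j| := by
  set Δ : Fin d → ℝ := fun j => βs j - βt j with hΔ
  have hbdd : BddBelow (Set.range (lassoCost X y lam)) := by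
    refine ⟨0, ?_⟩
    rintro _ ⟨β, rfl⟩
    have h1 : (0:ℝ) ≤ ∑ i, (y i - X.mulVec β i)^2 :=
      Finset.sum_nonneg fun i _ => sq_nonneg _
    have h2 : (0:ℝ) ≤ ∑ j, |β j| := Finset.sum_nonneg fun j _ => abs_nonneg _
    have := mul_nonneg hlam.le h2
    unfold lassoCost
    nlinarith
  have key : lassoCost X y lam βt ≤ lassoCost X y lam βs + lam * ε * ∑ j, |βt j| :=
    happrox.trans (add_le_add_left (ciInf_le hbdd βs) _)
  have e1 : ∀ i, y i - X.mulVec βs i = w i := by intro i; simp [hy]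
  have e2 : ∀ i, y i - X.mulVec βt i = X.mulVec Δ i + w i := by
    intro i
    simp only [hy, hΔ, mulVec, dotProduct, mul_sub, Finset.sum_sub_distrib]
    ring
  unfold lassoCost at key
  simp only [e1, e2] at key
  have expand : ∑ i, (X.mulVec Δ i + w i)^2 =
      ∑ i, (X.mulVec Δ i)^2 + 2 * ∑ i, X.mulVec Δ i * w i + ∑ i, w i ^ 2 := by
    rw [Finset.mul_sum, ← Finset.sum_add_distrib, ← Finset.sum_add_distrib]
    exact Finset.sum_congr rfl fun i _ => by ring
  rw [expand] at key
  have cross : ∑ i, X.mulVec Δ i * w i = ∑ j, Δ j * ∑ i, X i j * w i := by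
    simp only [mulVec, dotProduct, Finset.sum_mul]
    rw [Finset.sum_comm]
    refine Finset.sum_congr rfl fun j _ => ?_
    rw [Finset.mul_sum]
    exact Finset.sum_congr rfl fun i _ => by ring
  have habs : |∑ j, Δ j * ∑ i, X i j * w i| ≤ (∑ j, |Δ j|) * ((1 - ε) * lam) := by
    refine (Finset.abs_sum_le_sum_abs _ _).trans ?_
    rw [Finset.sum_mul]
    refine Finset.sum_le_sum fun j _ => ?_
    rw [abs_mul]
    exact mul_le_mul_of_nonneg_left (hlamw j) (abs_nonneg _)
  have hΔsum : ∑ j, |Δ j| ≤ ∑ j, |βs j| + ∑ j, |βt j| := by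
    rw [← Finset.sum_add_distrib]
    exact Finset.sum_le_sum fun j _ => abs_sub _ _
  have hcross_lb : -((∑ j, |βs j| + ∑ j, |βt j|) * ((1 - ε) * lam)) ≤
      ∑ i, X.mulVec Δ i * w i := by
    rw [cross]
    have := neg_abs_le (∑ j, Δ j * ∑ i, X i j * w i)
    have hmul : (∑ j, |Δ j|) * ((1 - ε) * lam) ≤
        (∑ j, |βs j| + ∑ j, |βt j|) * ((1 - ε) * lam) :=
      mul_le_mul_of_nonneg_right hΔsum
        (mul_nonneg (by linarith) hlam.le)
    linarith [habs]
  have hT : (0:ℝ) ≤ ∑ j, |βt j| := Finset.sum_nonneg fun j _ => abs_nonneg _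
  nlinarith [mul_nonneg hlam.le hT, mul_nonneg (mul_nonneg hlam.le hε₀) hT]
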